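/- Let A, B, C be compact convex sets in ℝ² that pairwise intersect but have empty triple intersection (a 'hole'). Then there exists a point ω ∉ A ∪ B ∪ C such that ω ∈ M for every compact convex set M satisfying M ∩ (X ∩ Y) ≠ ∅ for all pairs {X,Y} ⊆ {A,B,C}. -/

import Mathlib

open Set Filter Topology

noncomputable def xdet (a b : ℝ × ℝ) : ℝ := a.1 * b.2 - a.2 * b.1

lemma xdet_sum (p q r u : ℝ × ℝ) :
    xdet (q-u) (r-u) + xdet (r-u) (p-u) + xdet (p-u) (q-u) = xdet (q-p) (r-p) := by
  simp only [xdet, Prod.fst_sub, Prod.snd_sub]; ring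

lemma xdet_combo (p q r u : ℝ × ℝ) :
    xdet (q-u) (r-u) • p + xdet (r-u) (p-u) • q + xdet (p-u) (q-u) • r
      = xdet (q-p) (r-p) • u := by
  apply Prod.ext <;>
    simp only [xdet, Prod.fst_sub, Prod.snd_sub, Prod.fst_add, Prod.snd_add,
      Prod.smul_fst, Prod.smul_snd, smul_eq_mul] <;> ring

lemma xdet_uniq {p q r u : ℝ × ℝ} {a b c : ℝ} (hu : u = a•p + b•q + c•r)
    (hs : a + b + c = 1) :
    xdet (q-u) (r-u) = a * xdet (q-p) (r-p) ∧
    xdet (r-u) (p-u) = b * xdet (q-p) (r-p) ∧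
    xdet (p-u) (q-u) = c * xdet (q-p) (r-p) := by
  have ha : a = 1 - b - c := by linarith
  subst hu ha
  refine ⟨?_, ?_, ?_⟩ <;>
    simp only [xdet, Prod.fst_sub, Prod.snd_sub, Prod.fst_add, Prod.snd_add,
      Prod.smul_fst, Prod.smul_snd, smul_eq_mul] <;> ring

lemma xdet_continuous {F G : ℝ → ℝ × ℝ} (hF : Continuous F) (hG : Continuous G) :
    Continuous fun t => xdet (F t) (G t) := by
  unfold xdet
  exact ((hF.fst.mul hG.snd).sub (hF.snd.mul hG.fst))

lemma xdet_ne_zero {A B C : Set (ℝ × ℝ)}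
    (hAcv : Convex ℝ A) (hBcv : Convex ℝ B) (hCcv : Convex ℝ C)
    (htri : A ∩ B ∩ C = ∅) {p q r : ℝ × ℝ}
    (hp : p ∈ A ∩ B) (hq : q ∈ B ∩ C) (hr : r ∈ C ∩ A) :
    xdet (q - p) (r - p) ≠ 0 := by
  intro h0
  have hni : ∀ z : ℝ × ℝ, z ∈ A → z ∈ B → z ∈ C → False := by
    intro z hzA hzB hzC
    have : z ∈ A ∩ B ∩ C := ⟨⟨hzA, hzB⟩, hzC⟩
    simp [htri] at this
  by_cases hqp : q = p
  · exact hni p hp.1 hp.2 (hqp ▸ hq.2)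
  have hv : (q.1 - p.1)^2 + (q.2 - p.2)^2 ≠ 0 := by
    intro h
    apply hqp
    have h1 : q.1 - p.1 = 0 := by nlinarith [sq_nonneg (q.1-p.1), sq_nonneg (q.2-p.2)]
    have h2 : q.2 - p.2 = 0 := by nlinarith [sq_nonneg (q.1-p.1), sq_nonneg (q.2-p.2)]
    exact Prod.ext (by linarith) (by linarith)
  set k : ℝ := ((q.1-p.1)*(r.1-p.1) + (q.2-p.2)*(r.2-p.2)) / ((q.1-p.1)^2 + (q.2-p.2)^2) with hk
  have hd0 : (q.1-p.1)*(r.2-p.2) - (q.2-p.2)*(r.1-p.1) = 0 := by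
    simpa [xdet, Prod.fst_sub, Prod.snd_sub] using h0
  have hre : r = (1-k) • p + k • q := by
    apply Prod.ext
    · simp only [Prod.fst_add, Prod.snd_add, Prod.smul_fst, Prod.smul_snd, smul_eq_mul, hk]
      field_simp
      linear_combination (-(q.2-p.2)) * hd0
    · simp only [Prod.fst_add, Prod.snd_add, Prod.smul_fst, Prod.smul_snd, smul_eq_mul, hk]
      field_simp
      linear_combination (q.1-p.1) * hd0
  rcases le_or_gt k 0 with hk0 | hk0
  · have h1k : (0:ℝ) < 1 - k := by linarith
    have hpe : p = (1/(1-k)) • r + (-k/(1-k)) • q := by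
      rw [hre]
      match_scalars <;> field_simp <;> ring
    have : p ∈ C := by
      rw [hpe]
      exact hCcv hr.1 hq.2 (by positivity) (div_nonneg (by linarith) (by linarith))
        (by field_simp; ring)
    exact hni p hp.1 hp.2 this
  rcases le_or_gt k 1 with hk1 | hk1
  · have : r ∈ B := by
      rw [hre]
      exact hBcv hp.2 hq.1 (by linarith) (le_of_lt hk0) (by ring)
    exact hni r hr.2 this hr.1
  · have hk0' : k ≠ 0 := by linarith
    have hqe : q = (1-1/k) • p + (1/k) • r := by
      rw [hre]
      match_scalars <;> field_simp <;> ring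
    have : q ∈ A := by
      rw [hqe]
      have h1 : (0:ℝ) ≤ 1 - 1/k := by
        have : 1/k ≤ 1 := by rw [div_le_one (by linarith)]; linarith
        linarith
      exact hAcv hp.1 hr.2 h1 (by positivity) (by field_simp; ring)
    exact hni q this hq.1 hq.2

lemma convex_combo3 {s : Set (ℝ × ℝ)} (hs : Convex ℝ s) {p q r : ℝ × ℝ}
    (hp : p ∈ s) (hq : q ∈ s) (hr : r ∈ s) {a b c : ℝ}
    (ha : 0 ≤ a) (hb : 0 ≤ b) (hc : 0 ≤ c) (habc : a + b + c = 1) :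
    a • p + b • q + c • r ∈ s := by
  have h := hs.sum_mem (t := Finset.univ) (w := ![a,b,c]) (z := ![p,q,r])
    (fun i _ => by fin_cases i <;> simpa)
    (by simp [Fin.sum_univ_three, habc])
    (fun i _ => by fin_cases i <;> simpa)
  simpa [Fin.sum_univ_three] using h

lemma exists_omega {A B C : Set (ℝ × ℝ)}
    (hAcp : IsCompact A) (hBcp : IsCompact B) (hCcp : IsCompact C)
    (hAcv : Convex ℝ A) (hBcv : Convex ℝ B) (hCcv : Convex ℝ C)
    (hAB : (A ∩ B).Nonempty) (hBC : (B ∩ C).Nonempty) (hCA : (C ∩ A).Nonempty)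
    (htri : A ∩ B ∩ C = ∅) :
    ∃ (p q r ω : ℝ × ℝ) (a b c : ℝ), p ∈ A ∩ B ∧ q ∈ B ∩ C ∧ r ∈ C ∩ A ∧
      ω ∉ A ∪ B ∪ C ∧ 0 < a ∧ 0 < b ∧ 0 < c ∧ a + b + c = 1 ∧
      a • p + b • q + c • r = ω := by
  obtain ⟨p, hp⟩ := hAB
  obtain ⟨q, hq⟩ := hBC
  obtain ⟨r, hr⟩ := hCA
  have hdisj : Disjoint (A ∩ B) C := Set.disjoint_iff_inter_eq_empty.mpr htri
  obtain ⟨f, u, v, hfu, huv, hfv⟩ := geometric_hahn_banach_compact_closed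
    (hAcv.inter hBcv) (hAcp.inter_right hBcp.isClosed) hCcv hCcp.isClosed hdisj
  set c0 : ℝ := (u + v) / 2 with hc0
  have hfp : f p < u := hfu p hp
  have hfq : v < f q := hfv q hq.2
  have hfr : v < f r := hfv r hr.1
  have huc : u < c0 := by rw [hc0]; linarith
  have hcv : c0 < v := by rw [hc0]; linarith
  have hpq : (0:ℝ) < f q - f p := by linarith
  have hpr : (0:ℝ) < f r - f p := by linarith
  set s : ℝ := (c0 - f p) / (f q - f p) with hsdef
  set s' : ℝ := (c0 - f p) / (f r - f p) with hs'def
  have hs0 : 0 ≤ s := div_nonneg (by linarith) (by linarith)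
  have hs1 : s ≤ 1 := by rw [hsdef, div_le_one hpq]; linarith
  have hs'0 : 0 ≤ s' := div_nonneg (by linarith) (by linarith)
  have hs'1 : s' ≤ 1 := by rw [hs'def, div_le_one hpr]; linarith
  set x : ℝ × ℝ := (1-s) • p + s • q with hxdef
  set y : ℝ × ℝ := (1-s') • p + s' • r with hydef
  have hxB : x ∈ B := hBcv hp.2 hq.1 (by linarith) hs0 (by ring)
  have hyA : y ∈ A := hAcv hp.1 hr.2 (by linarith) hs'0 (by ring)
  have hfx : f x = c0 := by
    rw [hxdef]
    simp only [map_add, map_smul, smul_eq_mul]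
    rw [hsdef]
    field_simp
    ring
  have hfy : f y = c0 := by
    rw [hydef]
    simp only [map_add, map_smul, smul_eq_mul]
    rw [hs'def]
    field_simp
    ring
  have hfseg : ∀ z ∈ segment ℝ x y, f z = c0 := by
    rintro z ⟨a1, b1, ha1, hb1, hab1, hz⟩
    rw [← hz]
    simp only [map_add, map_smul, smul_eq_mul, hfx, hfy]
    linear_combination c0 * hab1
  have hseg : ¬ (segment ℝ x y ⊆ A ∪ B) := by
    intro hsub
    obtain ⟨z, hzseg, hzA, hzB⟩ := isPreconnected_closed_iff.1
      (convex_segment x y).isPreconnected A B hAcp.isClosed hBcp.isClosed hsub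
      ⟨y, right_mem_segment _ _ _, hyA⟩ ⟨x, left_mem_segment _ _ _, hxB⟩
    have h1 := hfu z ⟨hzA, hzB⟩
    have h2 := hfseg z hzseg
    linarith
  obtain ⟨ω, hωseg, hωAB⟩ := Set.not_subset.mp hseg
  have hfω : f ω = c0 := hfseg ω hωseg
  have hωA : ω ∉ A := fun h => hωAB (Or.inl h)
  have hωB : ω ∉ B := fun h => hωAB (Or.inr h)
  have hωC : ω ∉ C := fun h => by have := hfv ω h; linarith
  obtain ⟨t1, t2, ht1, ht2, ht12, hω⟩ := hωseg
  have h1s : (0:ℝ) ≤ 1 - s := by linarith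
  have h1s' : (0:ℝ) ≤ 1 - s' := by linarith
  have hcombo : (t1*(1-s) + t2*(1-s')) • p + (t1*s) • q + (t2*s') • r = ω := by
    rw [← hω, hxdef, hydef]; match_scalars <;> ring
  have ha0 : 0 ≤ t1*(1-s) + t2*(1-s') := add_nonneg (mul_nonneg ht1 h1s) (mul_nonneg ht2 h1s')
  have hb0 : (0:ℝ) ≤ t1*s := mul_nonneg ht1 hs0
  have hcc0 : (0:ℝ) ≤ t2*s' := mul_nonneg ht2 hs'0
  have hsum1 : (t1*(1-s) + t2*(1-s')) + t1*s + t2*s' = 1 := by linear_combination ht12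
  refine ⟨p, q, r, ω, t1*(1-s) + t2*(1-s'), t1*s, t2*s', hp, hq, hr, ?_, ?_, ?_, ?_, hsum1, hcombo⟩
  · rintro (h | h)
    · exact hωAB h
    · exact hωC h
  · rcases lt_or_eq_of_le ha0 with h | h
    · exact h
    · exfalso
      apply hωC
      have hc2 := hcombo
      rw [← h, zero_smul, zero_add] at hc2
      rw [← hc2]
      exact hCcv hq.2 hr.1 hb0 hcc0 (by linarith)
  · rcases lt_or_eq_of_le hb0 with h | h
    · exact h
    · exfalso
      apply hωA
      have hc2 := hcombo
      rw [← h, zero_smul, add_zero] at hc2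
      rw [← hc2]
      exact hAcv hp.1 hr.2 ha0 hcc0 (by linarith)
  · rcases lt_or_eq_of_le hcc0 with h | h
    · exact h
    · exfalso
      apply hωB
      have hc2 := hcombo
      rw [← h, zero_smul, add_zero] at hc2
      rw [← hc2]
      exact hBcv hp.2 hq.1 ha0 hb0 (by linarith)

/-- If compact convex sets `A, B, C ⊆ ℝ²` form a hole (pairwise intersecting,
empty triple intersection), then there is a point `ω ∉ A ∪ B ∪ C` contained in
every compact convex lid `M`. -/
theorem hole_omega (A B C : Set (ℝ × ℝ))
    (hAcp : IsCompact A) (hBcp : IsCompact B) (hCcp : IsCompact C)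
    (hAcv : Convex ℝ A) (hBcv : Convex ℝ B) (hCcv : Convex ℝ C)
    (hAB : (A ∩ B).Nonempty) (hBC : (B ∩ C).Nonempty) (hCA : (C ∩ A).Nonempty)
    (htri : A ∩ B ∩ C = ∅) :
    ∃ ω : ℝ × ℝ, ω ∉ A ∪ B ∪ C ∧
      ∀ M : Set (ℝ × ℝ), IsCompact M → Convex ℝ M →
        (M ∩ (A ∩ B)).Nonempty → (M ∩ (B ∩ C)).Nonempty → (M ∩ (C ∩ A)).Nonempty →
        ω ∈ M := by
  obtain ⟨p, q, r, ω, a, b, c, hp, hq, hr, hωnot, ha, hb, hc, habc, hcombo0⟩ :=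
    exists_omega hAcp hBcp hCcp hAcv hBcv hCcv hAB hBC hCA htri
  refine ⟨ω, hωnot, ?_⟩
  intro M _hMcp hMcv hM1 hM2 hM3
  obtain ⟨p1, hp1M, hp1⟩ := hM1
  obtain ⟨q1, hq1M, hq1⟩ := hM2
  obtain ⟨r1, hr1M, hr1⟩ := hM3
  by_contra hωM
  set pp : ℝ → ℝ × ℝ := fun t => (1-t) • p + t • p1 with hppdef
  set qq : ℝ → ℝ × ℝ := fun t => (1-t) • q + t • q1 with hqqdef
  set rr : ℝ → ℝ × ℝ := fun t => (1-t) • r + t • r1 with hrrdef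
  have hppc : Continuous pp := by rw [hppdef]; fun_prop
  have hqqc : Continuous qq := by rw [hqqdef]; fun_prop
  have hrrc : Continuous rr := by rw [hrrdef]; fun_prop
  have hmemp : ∀ t ∈ Icc (0:ℝ) 1, pp t ∈ A ∩ B := fun t ht =>
    ⟨hAcv hp.1 hp1.1 (by linarith [ht.2]) ht.1 (by ring),
     hBcv hp.2 hp1.2 (by linarith [ht.2]) ht.1 (by ring)⟩
  have hmemq : ∀ t ∈ Icc (0:ℝ) 1, qq t ∈ B ∩ C := fun t ht =>
    ⟨hBcv hq.1 hq1.1 (by linarith [ht.2]) ht.1 (by ring),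
     hCcv hq.2 hq1.2 (by linarith [ht.2]) ht.1 (by ring)⟩
  have hmemr : ∀ t ∈ Icc (0:ℝ) 1, rr t ∈ C ∩ A := fun t ht =>
    ⟨hCcv hr.1 hr1.1 (by linarith [ht.2]) ht.1 (by ring),
     hAcv hr.2 hr1.2 (by linarith [ht.2]) ht.1 (by ring)⟩
  set Dd : ℝ → ℝ := fun t => xdet (qq t - pp t) (rr t - pp t) with hDdef
  have hD : ∀ t ∈ Icc (0:ℝ) 1, Dd t ≠ 0 := fun t ht =>
    xdet_ne_zero hAcv hBcv hCcv htri (hmemp t ht) (hmemq t ht) (hmemr t ht)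
  set α : ℝ → ℝ := fun t => xdet (qq t - ω) (rr t - ω) / Dd t with hαdef
  set β : ℝ → ℝ := fun t => xdet (rr t - ω) (pp t - ω) / Dd t with hβdef
  set γ : ℝ → ℝ := fun t => xdet (pp t - ω) (qq t - ω) / Dd t with hγdef
  have hDc : Continuous Dd := by
    rw [hDdef]; exact xdet_continuous (hqqc.sub hppc) (hrrc.sub hppc)
  have hαc : ContinuousOn α (Icc 0 1) := by
    rw [hαdef]
    exact (xdet_continuous (hqqc.sub continuous_const)
      (hrrc.sub continuous_const)).continuousOn.div hDc.continuousOn hD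
  have hβc : ContinuousOn β (Icc 0 1) := by
    rw [hβdef]
    exact (xdet_continuous (hrrc.sub continuous_const)
      (hppc.sub continuous_const)).continuousOn.div hDc.continuousOn hD
  have hγc : ContinuousOn γ (Icc 0 1) := by
    rw [hγdef]
    exact (xdet_continuous (hppc.sub continuous_const)
      (hqqc.sub continuous_const)).continuousOn.div hDc.continuousOn hD
  have hsum : ∀ t ∈ Icc (0:ℝ) 1, α t + β t + γ t = 1 := by
    intro t ht
    have hD' := hD t ht
    simp only [hαdef, hβdef, hγdef]
    rw [← add_div, ← add_div, xdet_sum]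
    exact div_self hD'
  have hcombo : ∀ t ∈ Icc (0:ℝ) 1, α t • pp t + β t • qq t + γ t • rr t = ω := by
    intro t ht
    have hD' := hD t ht
    have h := xdet_combo (pp t) (qq t) (rr t) ω
    calc α t • pp t + β t • qq t + γ t • rr t
        = (Dd t)⁻¹ • (xdet (qq t - ω) (rr t - ω) • pp t
            + xdet (rr t - ω) (pp t - ω) • qq t + xdet (pp t - ω) (qq t - ω) • rr t) := by
          simp only [hαdef, hβdef, hγdef, smul_add, smul_smul, div_eq_inv_mul]
      _ = ω := by
          rw [h, show xdet (qq t - pp t) (rr t - pp t) = Dd t from rfl,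
            smul_smul, inv_mul_cancel₀ hD', one_smul]
  have hpp0 : pp 0 = p := by simp [hppdef]
  have hqq0 : qq 0 = q := by simp [hqqdef]
  have hrr0 : rr 0 = r := by simp [hrrdef]
  have hpp1 : pp 1 = p1 := by simp [hppdef]
  have hqq1 : qq 1 = q1 := by simp [hqqdef]
  have hrr1 : rr 1 = r1 := by simp [hrrdef]
  have hD0 : xdet (q - p) (r - p) ≠ 0 := xdet_ne_zero hAcv hBcv hCcv htri hp hq hr
  have huniq := xdet_uniq hcombo0.symm habc
  have hα0 : α 0 = a := by
    simp only [hαdef, hDdef, hpp0, hqq0, hrr0]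
    rw [huniq.1, mul_div_assoc, div_self hD0, mul_one]
  have hβ0 : β 0 = b := by
    simp only [hβdef, hDdef, hpp0, hqq0, hrr0]
    rw [huniq.2.1, mul_div_assoc, div_self hD0, mul_one]
  have hγ0 : γ 0 = c := by
    simp only [hγdef, hDdef, hpp0, hqq0, hrr0]
    rw [huniq.2.2, mul_div_assoc, div_self hD0, mul_one]
  set g : ℝ → ℝ := fun t => min (α t) (min (β t) (γ t)) with hgdef
  have hgc : ContinuousOn g (Icc 0 1) := by
    rw [hgdef]; exact hαc.inf (hβc.inf hγc)
  have hg0 : 0 < g 0 := by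
    simp only [hgdef, lt_min_iff, hα0, hβ0, hγ0]
    exact ⟨ha, hb, hc⟩
  have h1I : (1:ℝ) ∈ Icc (0:ℝ) 1 := right_mem_Icc.mpr zero_le_one
  have hg1 : g 1 < 0 := by
    by_contra hcon
    push_neg at hcon
    have hα1 : 0 ≤ α 1 := le_trans hcon (min_le_left _ _)
    have hβ1 : 0 ≤ β 1 := le_trans hcon (le_trans (min_le_right _ _) (min_le_left _ _))
    have hγ1 : 0 ≤ γ 1 := le_trans hcon (le_trans (min_le_right _ _) (min_le_right _ _))
    apply hωM
    have hc1 := hcombo 1 h1I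
    rw [hpp1, hqq1, hrr1] at hc1
    rw [← hc1]
    exact convex_combo3 hMcv hp1M hq1M hr1M hα1 hβ1 hγ1 (hsum 1 h1I)
  set S : Set ℝ := Icc (0:ℝ) 1 ∩ g ⁻¹' (Iic 0) with hSdef
  have hSc : IsClosed S := hgc.preimage_isClosed_of_isClosed isClosed_Icc isClosed_Iic
  have hSne : S.Nonempty := ⟨1, h1I, le_of_lt hg1⟩
  have hSbd : BddBelow S := ⟨0, fun x hx => hx.1.1⟩
  set t0 : ℝ := sInf S with ht0def
  have htS : t0 ∈ S := hSc.csInf_mem hSne hSbd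
  have htIcc : t0 ∈ Icc (0:ℝ) 1 := htS.1
  have hgt0 : g t0 ≤ 0 := htS.2
  have ht0pos : 0 < t0 := by
    rcases lt_or_eq_of_le htIcc.1 with h | h
    · exact h
    · exfalso; rw [← h] at hgt0; linarith
  have hposlt : ∀ t, 0 ≤ t → t < t0 → 0 < g t := by
    intro t h0t htt
    by_contra hcon
    push_neg at hcon
    have hmem : t ∈ S := ⟨⟨h0t, le_trans htt.le htIcc.2⟩, hcon⟩
    have := csInf_le hSbd hmem
    linarith
  have hge : 0 ≤ g t0 := by
    have hnb : (𝓝[Ico (0:ℝ) t0] t0).NeBot := right_nhdsWithin_Ico_neBot ht0pos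
    have htend : Tendsto g (𝓝[Ico (0:ℝ) t0] t0) (𝓝 (g t0)) :=
      (hgc t0 htIcc).mono_left
        (nhdsWithin_mono _ (fun x hx => ⟨hx.1, le_trans hx.2.le htIcc.2⟩))
    refine ge_of_tendsto htend ?_
    filter_upwards [self_mem_nhdsWithin] with t ht
    exact (hposlt t ht.1 ht.2).le
  have hαt : 0 ≤ α t0 := le_trans hge (min_le_left _ _)
  have hβt : 0 ≤ β t0 := le_trans hge (le_trans (min_le_right _ _) (min_le_left _ _))
  have hγt : 0 ≤ γ t0 := le_trans hge (le_trans (min_le_right _ _) (min_le_right _ _))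
  have hct := hcombo t0 htIcc
  have hst := hsum t0 htIcc
  have hmin : α t0 = 0 ∨ β t0 = 0 ∨ γ t0 = 0 := by
    by_contra hcon
    push_neg at hcon
    obtain ⟨h1, h2, h3⟩ := hcon
    have hlt : 0 < g t0 := by
      simp only [hgdef, lt_min_iff]
      exact ⟨lt_of_le_of_ne hαt (Ne.symm h1), lt_of_le_of_ne hβt (Ne.symm h2),
        lt_of_le_of_ne hγt (Ne.symm h3)⟩
    linarith
  rcases hmin with h | h | h
  · apply hωnot
    rw [h, zero_smul, zero_add] at hct
    rw [show A ∪ B ∪ C = (A ∪ B) ∪ C from rfl]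
    refine Or.inr ?_
    rw [← hct]
    exact hCcv (hmemq t0 htIcc).2 (hmemr t0 htIcc).1 hβt hγt (by rw [h] at hst; linarith)
  · apply hωnot
    rw [h, zero_smul, add_zero] at hct
    refine Or.inl (Or.inl ?_)
    rw [← hct]
    exact hAcv (hmemp t0 htIcc).1 (hmemr t0 htIcc).2 hαt hγt (by rw [h] at hst; linarith)
  · apply hωnot
    rw [h, zero_smul, add_zero] at hct
    refine Or.inl (Or.inr ?_)
    rw [← hct]
    exact hBcv (hmemp t0 htIcc).2 (hmemq t0 htIcc).1 hαt hβt (by rw [h] at hst; linarith)
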